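/- The weighted-automaton fixpoint computation is monotone and terminates in the max-times semiring: defining w₀(q) = 1 if q ∈ F and 0 otherwise, and w_{i+1}(q) = max(w_i(q), max_{q'} wt(q,q') · w_i(q')), the sequence (w_i) is pointwise nondecreasing, bounded by 1, and its pointwise supremum w satisfies max_q in(q) · w(q) = sup over all runs ρ = q₀,...,q_n with q_n ∈ F of in(q₀) · ∏_{i<n} wt(q_i, q_{i+1}). -/
import Mathlib

/-- Weight of a run (a finite sequence of states): the product of the
transition weights along consecutive pairs (empty product = 1). -/
def chainWt {Q : Type} (wt : Q → Q → ℝ) : List Q → ℝ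
  | [] => 1
  | [_] => 1
  | a :: b :: rest => wt a b * chainWt wt (b :: rest)

theorem chainWt_cons {Q : Type} (wt : Q → Q → ℝ) (a : Q) (l : List Q) (h : l ≠ []) :
    chainWt wt (a :: l) = wt a (l.head h) * chainWt wt l := by
  cases l with
  | nil => exact absurd rfl h
  | cons b rest => rfl

/-- The weighted-automaton fixpoint computation in the max-times semiring:
the iterates `w i` are pointwise nondecreasing, bounded by 1, and their
pointwise supremum `w` satisfies `max_q in(q) * w(q) = sup over runs of
in(q₀) * weight of the run`. -/
theorem stmt_9 (Q : Type) [Fintype Q] [Nonempty Q] [DecidableEq Q]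
    (wt : Q → Q → ℝ) (input : Q → ℝ) (F : Finset Q)
    (hin : ∀ q, input q ∈ Set.Icc (0:ℝ) 1)
    (hwt : ∀ q q', wt q q' ∈ Set.Icc (0:ℝ) 1)
    (w : ℕ → Q → ℝ)
    (hw0 : ∀ q, w 0 q = if q ∈ F then 1 else 0)
    (hwsucc : ∀ i q, w (i + 1) q =
      max (w i q) (Finset.univ.sup' Finset.univ_nonempty fun q' => wt q q' * w i q')) :
    (∀ q, Monotone fun i => w i q) ∧
    (∀ i q, w i q ≤ 1) ∧
    (Finset.univ.sup' Finset.univ_nonempty (fun q => input q * ⨆ i, w i q) =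
      sSup {x : ℝ | ∃ (l : List Q) (h : l ≠ []),
        l.getLast h ∈ F ∧ x = input (l.head h) * chainWt wt l}) := by
  have hwtnn : ∀ q q', 0 ≤ wt q q' := fun q q' => (hwt q q').1
  have hwt1 : ∀ q q', wt q q' ≤ 1 := fun q q' => (hwt q q').2
  have hinn : ∀ q, 0 ≤ input q := fun q => (hin q).1
  have hin1 : ∀ q, input q ≤ 1 := fun q => (hin q).2
  -- chainWt bounds
  have hcnn : ∀ l : List Q, 0 ≤ chainWt wt l := by
    intro l
    induction l with
    | nil => norm_num [chainWt]
    | cons a l ih =>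
      cases l with
      | nil => norm_num [chainWt]
      | cons b rest =>
        rw [show chainWt wt (a :: b :: rest) = wt a b * chainWt wt (b :: rest) from rfl]
        exact mul_nonneg (hwtnn a b) ih
  have hc1 : ∀ l : List Q, chainWt wt l ≤ 1 := by
    intro l
    induction l with
    | nil => norm_num [chainWt]
    | cons a l ih =>
      cases l with
      | nil => norm_num [chainWt]
      | cons b rest =>
        rw [show chainWt wt (a :: b :: rest) = wt a b * chainWt wt (b :: rest) from rfl]
        calc wt a b * chainWt wt (b :: rest) ≤ 1 * 1 :=
              mul_le_mul (hwt1 a b) ih (hcnn _) zero_le_one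
        _ = 1 := by ring
  -- bounds on w
  have hwb : ∀ i q, 0 ≤ w i q ∧ w i q ≤ 1 := by
    intro i
    induction i with
    | zero => intro q; rw [hw0]; split <;> norm_num
    | succ i ih =>
      intro q
      rw [hwsucc]
      constructor
      · exact le_trans (ih q).1 (le_max_left _ _)
      · refine max_le (ih q).2 (Finset.sup'_le _ _ fun q' _ => ?_)
        calc wt q q' * w i q' ≤ 1 * 1 :=
              mul_le_mul (hwt1 q q') (ih q').2 (ih q').1 zero_le_one
        _ = 1 := by ring
  have hmono : ∀ q, Monotone fun i => w i q := by
    intro q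
    apply monotone_nat_of_le_succ
    intro i
    rw [hwsucc]
    exact le_max_left _ _
  have hbdd : ∀ q, BddAbove (Set.range fun i => w i q) := by
    intro q
    exact ⟨1, by rintro x ⟨i, rfl⟩; exact (hwb i q).2⟩
  refine ⟨hmono, fun i q => (hwb i q).2, ?_⟩
  set S : Set ℝ := {x : ℝ | ∃ (l : List Q) (h : l ≠ []),
        l.getLast h ∈ F ∧ x = input (l.head h) * chainWt wt l} with hS
  have hSbdd : BddAbove S := by
    refine ⟨1, ?_⟩
    rintro x ⟨l, h, hF, rfl⟩
    calc input (l.head h) * chainWt wt l ≤ 1 * 1 :=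
          mul_le_mul (hin1 _) (hc1 _) (hcnn _) zero_le_one
    _ = 1 := by ring
  -- run weight bounded by iterates
  have runle : ∀ (l : List Q) (h : l ≠ []), l.getLast h ∈ F →
      chainWt wt l ≤ w (l.length - 1) (l.head h) := by
    intro l
    induction l with
    | nil => intro h; exact absurd rfl h
    | cons a l ih =>
      intro h hF
      cases l with
      | nil =>
        simp only [List.getLast_singleton] at hF
        simp only [List.head_cons, List.length_singleton]
        rw [show chainWt wt [a] = 1 from rfl, hw0, if_pos hF]
      | cons b rest =>
        have hne : (b :: rest) ≠ [] := by simp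
        have hlast : (b :: rest).getLast hne ∈ F := by
          rwa [List.getLast_cons hne] at hF
        have h1 := ih hne hlast
        have h2 : chainWt wt (a :: b :: rest) ≤ wt a b * w rest.length b := by
          rw [show chainWt wt (a :: b :: rest) = wt a b * chainWt wt (b :: rest) from rfl]
          have : (b :: rest).length - 1 = rest.length := by simp
          rw [this] at h1
          exact mul_le_mul_of_nonneg_left (by simpa using h1) (hwtnn a b)
        refine h2.trans ?_
        have hlen : (a :: b :: rest).length - 1 = rest.length + 1 := by simp
        rw [List.head_cons, hlen, hwsucc]
        exact le_trans (Finset.le_sup' (fun q' => wt a q' * w rest.length q') (Finset.mem_univ b)) (le_max_right _ _)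
  by_cases hF : F.Nonempty
  · obtain ⟨f, hf⟩ := hF
    have hself : (input f * chainWt wt [f]) ∈ S := ⟨[f], by simp, by simpa using hf, rfl⟩
    have hSne : S.Nonempty := ⟨_, hself⟩
    have hM0 : 0 ≤ sSup S := le_trans (by simpa [chainWt] using hinn f) (le_csSup hSbdd hself)
    -- key upper bound
    have hB : ∀ i q (c : ℝ), 0 ≤ c →
        (∀ (l : List Q) (h : l ≠ []), l.head h = q → l.getLast h ∈ F →
          c * chainWt wt l ≤ sSup S) →
        c * w i q ≤ sSup S := by
      intro i
      induction i with
      | zero =>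
        intro q c hc hyp
        rw [hw0]
        split
        · next hq => simpa [chainWt] using hyp [q] (by simp) (by simp) (by simpa using hq)
        · simpa using hM0
      | succ i ih =>
        intro q c hc hyp
        rw [hwsucc, mul_max_of_nonneg _ _ hc]
        refine max_le (ih q c hc hyp) ?_
        rcases eq_or_lt_of_le hc with hc0 | hc0
        · rw [← hc0]; simpa using hM0
        · rw [mul_comm, ← le_div_iff₀ hc0]
          refine Finset.sup'_le _ _ fun q' _ => ?_
          rw [le_div_iff₀ hc0, mul_comm, ← mul_assoc]
          refine ih q' (c * wt q q') (mul_nonneg hc (hwtnn q q')) ?_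
          intro l h hh hl
          have hcons : (q :: l) ≠ [] := by simp
          have := hyp (q :: l) hcons (by simp) (by rwa [List.getLast_cons h])
          rw [chainWt_cons wt q l h, hh] at this
          calc c * wt q q' * chainWt wt l = c * (wt q q' * chainWt wt l) := by ring
          _ ≤ sSup S := this
    apply le_antisymm
    · refine Finset.sup'_le _ _ fun q _ => ?_
      have hstep : ∀ i, input q * w i q ≤ sSup S := by
        intro i
        refine hB i q (input q) (hinn q) fun l h hh hl => le_csSup hSbdd ?_
        exact ⟨l, h, hl, by rw [hh]⟩
      rcases eq_or_lt_of_le (hinn q) with h0 | h0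
      · rw [← h0, zero_mul]; exact hM0
      · rw [mul_comm, ← le_div_iff₀ h0]
        refine ciSup_le fun i => ?_
        rw [le_div_iff₀ h0, mul_comm]
        exact hstep i
    · refine csSup_le hSne ?_
      rintro x ⟨l, h, hlast, rfl⟩
      calc input (l.head h) * chainWt wt l
          ≤ input (l.head h) * w (l.length - 1) (l.head h) :=
            mul_le_mul_of_nonneg_left (runle l h hlast) (hinn _)
      _ ≤ input (l.head h) * ⨆ i, w i (l.head h) :=
            mul_le_mul_of_nonneg_left (le_ciSup (hbdd _) (l.length - 1)) (hinn _)
      _ ≤ _ := Finset.le_sup' (fun q => input q * ⨆ i, w i q) (Finset.mem_univ (l.head h))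
  · -- F empty
    have hFe : F = ∅ := Finset.not_nonempty_iff_eq_empty.mp hF
    have hw00 : ∀ i q, w i q = 0 := by
      intro i
      induction i with
      | zero => intro q; rw [hw0, hFe]; simp
      | succ i ih =>
        intro q
        rw [hwsucc]
        simp [ih]
    have hSe : S = ∅ := by
      rw [Set.eq_empty_iff_forall_notMem]
      rintro x ⟨l, h, hlast, rfl⟩
      rw [hFe] at hlast
      exact absurd hlast (Finset.notMem_empty _)
    rw [hSe, Real.sSup_empty]
    refine le_antisymm (Finset.sup'_le _ _ fun q _ => ?_) ?_
    · simp [hw00]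
    · refine le_trans ?_ (Finset.le_sup' _ (Finset.mem_univ (Classical.arbitrary Q)))
      simp [hw00]
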